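/- Let q ≥ 2 and f(s) = (max(s,0))^q. Then there exists C > 0 such that for all a, b₁, b₂ ∈ ℝ: |f(a+b₁) - f(a) - f'(a)b₁ - (f(a+b₂) - f(a) - f'(a)b₂)| ≤ C (|a| + |b₁| + |b₂|)^{q-2} (|b₁| + |b₂|) |b₁ - b₂|, where f'(s) = q (max(s,0))^{q-1}. -/

import Mathlib

open Real Set

/-- a^p - b^p ≤ p * a^(p-1) * (a - b) style MVT bound for 0 ≤ b ≤ a, p ≥ 1. -/
lemma aux_rpow_sub_le {p a b : ℝ} (hp : 1 ≤ p) (hb : 0 ≤ b) (hba : b ≤ a) :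
    a ^ p - b ^ p ≤ p * a ^ (p - 1) * (a - b) := by
  have ha : 0 ≤ a := hb.trans hba
  have hmvt : ‖a ^ p - b ^ p‖ ≤ p * a ^ (p - 1) * ‖a - b‖ := by
    apply Convex.norm_image_sub_le_of_norm_hasDerivWithin_le
      (f := fun x : ℝ => x ^ p) (f' := fun x : ℝ => p * x ^ (p - 1))
      (s := Icc b a)
    · intro x _
      exact (Real.hasDerivAt_rpow_const (Or.inr hp)).hasDerivWithinAt
    · intro x hx
      have hx0 : 0 ≤ x := hb.trans hx.1
      have h3 : x ^ (p - 1) ≤ a ^ (p - 1) :=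
        Real.rpow_le_rpow hx0 (hx.2) (by linarith)
      have h1 : 0 ≤ x ^ (p - 1) := Real.rpow_nonneg hx0 _
      rw [Real.norm_eq_abs, abs_mul, abs_of_nonneg h1, abs_of_nonneg (by linarith : (0:ℝ) ≤ p)]
      exact mul_le_mul_of_nonneg_left h3 (by linarith)
    · exact convex_Icc b a
    · exact ⟨le_refl b, hba⟩
    · exact ⟨hba, le_refl a⟩
  have h2 : 0 ≤ a ^ p - b ^ p := by
    have := Real.rpow_le_rpow hb hba (by linarith : (0:ℝ) ≤ p)
    linarith
  rw [Real.norm_eq_abs, Real.norm_eq_abs, abs_of_nonneg h2, abs_of_nonneg (by linarith)] at hmvt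
  exact hmvt

/-- |x⁺^p - y⁺^p| ≤ p * (max |x| |y|)^(p-1) * |x - y| for p ≥ 1. -/
lemma aux_pos_part_rpow_diff {p : ℝ} (hp : 1 ≤ p) (x y : ℝ) :
    |(max x 0) ^ p - (max y 0) ^ p| ≤ p * (max |x| |y|) ^ (p - 1) * |x - y| := by
  have key : ∀ u v : ℝ, max v 0 ≤ max u 0 →
      (max u 0) ^ p - (max v 0) ^ p ≤ p * (max |u| |v|) ^ (p - 1) * |u - v| := by
    intro u v huv
    have h1 : (max u 0) ^ p - (max v 0) ^ p ≤ p * (max u 0) ^ (p - 1) * (max u 0 - max v 0) :=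
      aux_rpow_sub_le hp (le_max_right v 0) huv
    have h2 : max u 0 - max v 0 ≤ |u - v| := by
      have := abs_max_sub_max_le_abs u v 0
      rw [abs_sub_le_iff] at this
      exact this.1
    have h3 : (max u 0) ^ (p - 1) ≤ (max |u| |v|) ^ (p - 1) := by
      apply Real.rpow_le_rpow (le_max_right u 0) _ (by linarith)
      exact max_le ((le_abs_self u).trans (le_max_left _ _))
        ((abs_nonneg u).trans (le_max_left _ _))
    have hnn : 0 ≤ max u 0 - max v 0 := by linarith
    calc (max u 0) ^ p - (max v 0) ^ p
        ≤ p * (max u 0) ^ (p - 1) * (max u 0 - max v 0) := h1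
      _ ≤ p * (max |u| |v|) ^ (p - 1) * |u - v| := by
          apply mul_le_mul
          · exact mul_le_mul_of_nonneg_left h3 (by linarith)
          · exact h2
          · exact hnn
          · positivity
  rcases le_total (max y 0) (max x 0) with h | h
  · rw [abs_of_nonneg (by
      have := Real.rpow_le_rpow (le_max_right y 0) h (by linarith : (0:ℝ) ≤ p); linarith)]
    exact key x y h
  · rw [abs_of_nonpos (by
      have := Real.rpow_le_rpow (le_max_right x 0) h (by linarith : (0:ℝ) ≤ p); linarith)]
    have := key y x h
    rw [max_comm |y| |x|, abs_sub_comm y x] at this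
    linarith

/-- Derivative of s ↦ (s⁺)^q. -/
lemma aux_hasDerivAt_pos_part_rpow {q : ℝ} (hq : 2 ≤ q) (s : ℝ) :
    HasDerivAt (fun t : ℝ => (max t 0) ^ q) (q * (max s 0) ^ (q - 1)) s := by
  rcases lt_trichotomy s 0 with hs | hs | hs
  · have heq : (fun t : ℝ => (max t 0) ^ q) =ᶠ[nhds s] fun _ => (0:ℝ) ^ q := by
      filter_upwards [Iio_mem_nhds hs] with t ht
      rw [max_eq_right (le_of_lt ht)]
    rw [max_eq_right hs.le, Real.zero_rpow (by linarith : q - 1 ≠ 0), mul_zero]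
    exact (hasDerivAt_const s ((0:ℝ) ^ q)).congr_of_eventuallyEq heq
  · subst hs
    rw [max_self, Real.zero_rpow (by linarith : q - 1 ≠ 0), mul_zero]
    rw [hasDerivAt_iff_isLittleO, Asymptotics.isLittleO_iff]
    intro c hc
    filter_upwards [Metric.ball_mem_nhds (0:ℝ) (by positivity : (0:ℝ) < min 1 c)] with t ht
    rw [Metric.mem_ball, Real.dist_eq, sub_zero] at ht
    have ht1 : |t| ≤ 1 := (lt_of_lt_of_le ht (min_le_left _ _)).le
    have htc : |t| ≤ c := (lt_of_lt_of_le ht (min_le_right _ _)).le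
    have hmax0 : max (0:ℝ) 0 = 0 := max_self 0
    simp only [hmax0, sub_zero, smul_zero, Real.norm_eq_abs]
    rw [Real.zero_rpow (by linarith : q ≠ 0), sub_zero]
    rcases eq_or_lt_of_le (abs_nonneg t) with h0 | h0
    · have : t = 0 := abs_eq_zero.mp h0.symm
      simp [this, Real.zero_rpow (by linarith : q ≠ 0)]
    have hmt : max t 0 ≤ |t| := max_le (le_abs_self t) (abs_nonneg t)
    have h1 : (max t 0) ^ q ≤ |t| ^ q := Real.rpow_le_rpow (le_max_right t 0) hmt (by linarith)
    have h2 : |t| ^ q = |t| ^ (q - 1) * |t| := by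
      have h5 := Real.rpow_add h0 (q - 1) 1
      rw [Real.rpow_one] at h5
      rw [show q - 1 + 1 = q by ring] at h5
      exact h5
    have h3 : |t| ^ (q - 1) ≤ |t| ^ (1:ℝ) :=
      Real.rpow_le_rpow_of_exponent_ge h0 ht1 (by linarith)
    have h4 : (max t 0) ^ q ≤ c * |t| := by
      rw [Real.rpow_one] at h3
      calc (max t 0) ^ q ≤ |t| ^ q := h1
        _ = |t| ^ (q - 1) * |t| := h2
        _ ≤ c * |t| := mul_le_mul_of_nonneg_right (h3.trans htc) (abs_nonneg t)
    rw [abs_of_nonneg (Real.rpow_nonneg (le_max_right t 0) q)]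
    exact h4
  · have heq : (fun t : ℝ => (max t 0) ^ q) =ᶠ[nhds s] fun t => t ^ q := by
      filter_upwards [Ioi_mem_nhds hs] with t ht
      rw [max_eq_left (le_of_lt ht)]
    rw [max_eq_left hs.le]
    exact (Real.hasDerivAt_rpow_const (Or.inl (ne_of_gt hs))).congr_of_eventuallyEq heq

theorem positive_part_power_taylor_difference (q : ℝ) (hq : 2 ≤ q) :
    ∃ C > 0, ∀ a b₁ b₂ : ℝ,
      |((max (a + b₁) 0) ^ q - (max a 0) ^ q - q * (max a 0) ^ (q - 1) * b₁) -
          ((max (a + b₂) 0) ^ q - (max a 0) ^ q - q * (max a 0) ^ (q - 1) * b₂)| ≤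
        C * (|a| + |b₁| + |b₂|) ^ (q - 2) * (|b₁| + |b₂|) * |b₁ - b₂| := by
  refine ⟨q * (q - 1), by nlinarith, fun a b₁ b₂ => ?_⟩
  set X := |a| + |b₁| + |b₂| with hX
  set Y := |b₁| + |b₂| with hY
  have hX0 : 0 ≤ X := by rw [hX]; positivity
  have hY0 : 0 ≤ Y := by rw [hY]; positivity
  set h : ℝ → ℝ := fun b => (max (a + b) 0) ^ q - (max a 0) ^ q - q * (max a 0) ^ (q - 1) * b
    with hh
  set h' : ℝ → ℝ := fun b => q * (max (a + b) 0) ^ (q - 1) - q * (max a 0) ^ (q - 1) with hh'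
  have hd : ∀ b : ℝ, HasDerivAt h (h' b) b := by
    intro b
    have h1 : HasDerivAt (fun b : ℝ => (max (a + b) 0) ^ q)
        (q * (max (a + b) 0) ^ (q - 1)) b := by
      have := (aux_hasDerivAt_pos_part_rpow hq (a + b)).comp b
        ((hasDerivAt_id b).const_add a)
      simpa [Function.comp_def] using this
    have h2 : HasDerivAt (fun b : ℝ => q * (max a 0) ^ (q - 1) * b)
        (q * (max a 0) ^ (q - 1)) b := by
      simpa using (hasDerivAt_id b).const_mul (q * (max a 0) ^ (q - 1))
    simpa [hh, hh', Pi.sub_def] using (h1.sub (hasDerivAt_const b ((max a 0) ^ q))).sub h2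
  have bound : ∀ b ∈ segment ℝ b₂ b₁, ‖h' b‖ ≤ q * (q - 1) * X ^ (q - 2) * Y := by
    intro b hb
    rw [segment_eq_uIcc] at hb
    have hb1 : |b| ≤ Y := by
      rw [abs_le]
      have h1 : -|b₂| ≤ b₂ := neg_abs_le b₂
      have h2 : -|b₁| ≤ b₁ := neg_abs_le b₁
      have h3 : b₂ ≤ |b₂| := le_abs_self b₂
      have h4 : b₁ ≤ |b₁| := le_abs_self b₁
      have h5 : min b₂ b₁ ≤ b := hb.1
      have h6 : b ≤ max b₂ b₁ := hb.2
      constructor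
      · rcases le_total b₂ b₁ with hc | hc <;>
          [rw [min_eq_left hc] at h5; rw [min_eq_right hc] at h5] <;> rw [hY] <;> linarith
      · rcases le_total b₂ b₁ with hc | hc <;>
          [rw [max_eq_right hc] at h6; rw [max_eq_left hc] at h6] <;> rw [hY] <;> linarith
    have key := aux_pos_part_rpow_diff (p := q - 1) (by linarith) (a + b) a
    have hmax : max |a + b| |a| ≤ X := by
      apply max_le
      · calc |a + b| ≤ |a| + |b| := abs_add_le a b
          _ ≤ |a| + Y := by linarith
          _ = X := by rw [hX, hY]; ring
      · rw [hX]
        have := abs_nonneg b₁; have := abs_nonneg b₂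
        linarith
    have hmax0 : 0 ≤ max |a + b| |a| := (abs_nonneg _).trans (le_max_left _ _)
    have hpow : (max |a + b| |a|) ^ (q - 2) ≤ X ^ (q - 2) :=
      Real.rpow_le_rpow hmax0 hmax (by linarith)
    have habs : |a + b - a| = |b| := by ring_nf
    rw [habs] at key
    have hq1 : (q - 1) - 1 = q - 2 := by ring
    rw [hq1] at key
    have hstep : ‖h' b‖ = q * |(max (a + b) 0) ^ (q - 1) - (max a 0) ^ (q - 1)| := by
      rw [hh']
      simp only [Real.norm_eq_abs]
      rw [← mul_sub, abs_mul, abs_of_nonneg (by linarith : (0:ℝ) ≤ q)]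
    rw [hstep]
    calc q * |(max (a + b) 0) ^ (q - 1) - (max a 0) ^ (q - 1)|
        ≤ q * ((q - 1) * (max |a + b| |a|) ^ (q - 2) * |b|) :=
          mul_le_mul_of_nonneg_left key (by linarith)
      _ ≤ q * ((q - 1) * (X ^ (q - 2)) * Y) := by
          apply mul_le_mul_of_nonneg_left _ (by linarith : (0:ℝ) ≤ q)
          apply mul_le_mul
          · exact mul_le_mul_of_nonneg_left hpow (by linarith)
          · exact hb1
          · exact abs_nonneg b
          · exact mul_nonneg (by linarith) (Real.rpow_nonneg hX0 _)
      _ = q * (q - 1) * X ^ (q - 2) * Y := by ring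
  have mvt : ‖h b₁ - h b₂‖ ≤ (q * (q - 1) * X ^ (q - 2) * Y) * ‖b₁ - b₂‖ := by
    apply Convex.norm_image_sub_le_of_norm_hasDerivWithin_le
      (fun b hb => (hd b).hasDerivWithinAt) bound (convex_segment b₂ b₁)
      (left_mem_segment ℝ b₂ b₁) (right_mem_segment ℝ b₂ b₁)
  simp only [Real.norm_eq_abs] at mvt
  calc |((max (a + b₁) 0) ^ q - (max a 0) ^ q - q * (max a 0) ^ (q - 1) * b₁) -
          ((max (a + b₂) 0) ^ q - (max a 0) ^ q - q * (max a 0) ^ (q - 1) * b₂)|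
      = |h b₁ - h b₂| := by rw [hh]
    _ ≤ (q * (q - 1) * X ^ (q - 2) * Y) * |b₁ - b₂| := mvt
    _ = q * (q - 1) * X ^ (q - 2) * Y * |b₁ - b₂| := by ring
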